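/- If D = A ⋈ H is a double cross product of finite-dimensional Hopf algebras and D is cosemisimple, then A and H are cosemisimple. -/

import Mathlib

open TensorProduct

/-- A subspace `V` of a coalgebra `H` is a subcoalgebra if `Δ(V) ⊆ V ⊗ V` inside `H ⊗ H`. -/
def IsSubcoalgebra (k : Type*) {H : Type*} [CommRing k] [AddCommGroup H] [Module k H]
    [Coalgebra k H] (V : Submodule k H) : Prop :=
  ∀ x ∈ V, Coalgebra.comul (R := k) x ∈
    LinearMap.range (TensorProduct.map V.subtype V.subtype)

/-- A coalgebra is cosemisimple if it is the sum of its simple subcoalgebras. -/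
def IsCosemisimple (k H : Type*) [CommRing k] [AddCommGroup H] [Module k H]
    [Coalgebra k H] : Prop :=
  sSup {V : Submodule k H | IsSubcoalgebra k V ∧ V ≠ ⊥ ∧
    ∀ W ≤ V, IsSubcoalgebra k W → W = ⊥ ∨ W = V} = ⊤

/-! ### Auxiliary theory

We prove: in a finite-dimensional coalgebra `C` over a field whose simple subcoalgebras
sum to `⊤`, every subcoalgebra is contained in the sum of the simple subcoalgebras it
contains.  This is proved by passing to the dual "convolution" product, where
subcoalgebras correspond to two-sided ideals.  Then cosemisimplicity transfers along
injective coalgebra maps, and `A` and `H` embed into `D` as subcoalgebras. -/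

noncomputable section Aux

open Coalgebra Submodule LinearMap

variable {k : Type*} [Field k]

/-- A simple subcoalgebra. -/
def IsSimpleSubcoalgebra (k : Type*) {C : Type*} [CommRing k] [AddCommGroup C] [Module k C]
    [Coalgebra k C] (V : Submodule k C) : Prop :=
  IsSubcoalgebra k V ∧ V ≠ ⊥ ∧ ∀ W ≤ V, IsSubcoalgebra k W → W = ⊥ ∨ W = V

lemma isCosemisimple_iff (k C : Type*) [CommRing k] [AddCommGroup C] [Module k C]
    [Coalgebra k C] :
    IsCosemisimple k C ↔ sSup {V : Submodule k C | IsSimpleSubcoalgebra k V} = ⊤ :=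
  Iff.rfl

section MapZero

variable {M N P Q : Type*} [AddCommGroup M] [AddCommGroup N] [AddCommGroup P] [AddCommGroup Q]
  [Module k M] [Module k N] [Module k P] [Module k Q]

lemma mapZeroLeft (g : N →ₗ[k] Q) : TensorProduct.map (0 : M →ₗ[k] P) g = 0 := by
  apply TensorProduct.ext'
  intro m n
  simp

lemma mapZeroRight (f : M →ₗ[k] P) : TensorProduct.map f (0 : N →ₗ[k] Q) = 0 := by
  apply TensorProduct.ext'
  intro m n
  simp

end MapZero

section Conv

variable {C : Type*} [AddCommGroup C] [Module k C] [Coalgebra k C]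

/-- The convolution product on the linear dual of a coalgebra. -/
def cvFun (φ ψ : Module.Dual k C) : Module.Dual k C :=
  LinearMap.mul' k k ∘ₗ TensorProduct.map φ ψ ∘ₗ (Coalgebra.comul (R := k) (A := C))

/-- The convolution product as a bilinear map. -/
def cvL : Module.Dual k C →ₗ[k] Module.Dual k C →ₗ[k] Module.Dual k C :=
  LinearMap.mk₂ k cvFun
    (fun f₁ f₂ g => by
      unfold cvFun
      rw [TensorProduct.map_add_left, LinearMap.add_comp, LinearMap.comp_add])
    (fun c f g => by
      unfold cvFun
      rw [TensorProduct.map_smul_left, LinearMap.smul_comp, LinearMap.comp_smul])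
    (fun f g₁ g₂ => by
      unfold cvFun
      rw [TensorProduct.map_add_right, LinearMap.add_comp, LinearMap.comp_add])
    (fun c f g => by
      unfold cvFun
      rw [TensorProduct.map_smul_right, LinearMap.smul_comp, LinearMap.comp_smul])

lemma cv_eval (φ ψ : Module.Dual k C) (x : C) :
    cvL φ ψ x = LinearMap.mul' k k (TensorProduct.map φ ψ (Coalgebra.comul (R := k) x)) :=
  rfl

lemma cv_counit_right (φ : Module.Dual k C) : cvL φ (Coalgebra.counit (R := k)) = φ := by
  ext x
  have h1 : TensorProduct.map φ (Coalgebra.counit (R := k) (A := C)) (Coalgebra.comul (R := k) x)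
      = LinearMap.rTensor k φ
        (LinearMap.lTensor C (Coalgebra.counit (R := k)) (Coalgebra.comul (R := k) x)) :=
    (LinearMap.congr_fun (LinearMap.rTensor_comp_lTensor (f := φ)
      (g := Coalgebra.counit (R := k) (A := C))) (Coalgebra.comul (R := k) x)).symm
  rw [cv_eval, h1, Coalgebra.lTensor_counit_comul]
  simp

lemma cv_counit_left (φ : Module.Dual k C) : cvL (Coalgebra.counit (R := k)) φ = φ := by
  ext x
  have h1 : TensorProduct.map (Coalgebra.counit (R := k) (A := C)) φ (Coalgebra.comul (R := k) x)
      = LinearMap.lTensor k φ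
        (LinearMap.rTensor C (Coalgebra.counit (R := k)) (Coalgebra.comul (R := k) x)) :=
    (LinearMap.congr_fun (LinearMap.lTensor_comp_rTensor
      (f := Coalgebra.counit (R := k) (A := C)) (g := φ)) (Coalgebra.comul (R := k) x)).symm
  rw [cv_eval, h1, Coalgebra.rTensor_counit_comul]
  simp

/-- Two-sided ideals for the convolution product. -/
def IsTI (J : Submodule k (Module.Dual k C)) : Prop :=
  ∀ φ ∈ J, ∀ ψ : Module.Dual k C, cvL φ ψ ∈ J ∧ cvL ψ φ ∈ J

lemma isTI_sup {I J : Submodule k (Module.Dual k C)} (hI : IsTI I) (hJ : IsTI J) :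
    IsTI (I ⊔ J) := by
  intro φ hφ ψ
  obtain ⟨a, ha, b, hb, rfl⟩ := Submodule.mem_sup.mp hφ
  constructor
  · have h : cvL (a + b) ψ = cvL a ψ + cvL b ψ := by rw [map_add]; rfl
    rw [h]
    exact Submodule.add_mem_sup (hI a ha ψ).1 (hJ b hb ψ).1
  · have h : cvL ψ (a + b) = cvL ψ a + cvL ψ b := by rw [map_add]
    rw [h]
    exact Submodule.add_mem_sup (hI a ha ψ).2 (hJ b hb ψ).2

lemma isTI_dualAnnihilator {V : Submodule k C} (hV : IsSubcoalgebra k V) :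
    IsTI V.dualAnnihilator := by
  intro φ hφ ψ
  have hz : φ ∘ₗ V.subtype = 0 := by
    ext v
    exact (Submodule.mem_dualAnnihilator φ).mp hφ v v.2
  constructor
  · rw [Submodule.mem_dualAnnihilator]
    intro x hx
    obtain ⟨t, ht⟩ := hV x hx
    have hcc : TensorProduct.map φ ψ (TensorProduct.map V.subtype V.subtype t)
        = TensorProduct.map (φ ∘ₗ V.subtype) (ψ ∘ₗ V.subtype) t :=
      (LinearMap.congr_fun (TensorProduct.map_comp φ ψ V.subtype V.subtype) t).symm
    rw [cv_eval, ← ht, hcc, hz, mapZeroLeft]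
    simp
  · rw [Submodule.mem_dualAnnihilator]
    intro x hx
    obtain ⟨t, ht⟩ := hV x hx
    have hcc : TensorProduct.map ψ φ (TensorProduct.map V.subtype V.subtype t)
        = TensorProduct.map (ψ ∘ₗ V.subtype) (φ ∘ₗ V.subtype) t :=
      (LinearMap.congr_fun (TensorProduct.map_comp ψ φ V.subtype V.subtype) t).symm
    rw [cv_eval, ← ht, hcc, hz, mapZeroRight]
    simp

end Conv

section Sep

variable {M N : Type*} [AddCommGroup M] [AddCommGroup N] [Module k M] [Module k N]

lemma dualDistrib_eq_mul' (φ : Module.Dual k M) (ψ : Module.Dual k N) (s : M ⊗[k] N) :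
    TensorProduct.dualDistrib k M N (φ ⊗ₜ ψ) s = LinearMap.mul' k k (TensorProduct.map φ ψ s) := by
  induction s using TensorProduct.induction_on with
  | zero => simp
  | tmul m n => simp
  | add x y hx hy => simp [hx, hy]

lemma tensor_eq_zero_of_pairing [FiniteDimensional k M] [FiniteDimensional k N]
    (s : M ⊗[k] N)
    (h : ∀ (f : Module.Dual k M) (g : Module.Dual k N),
      LinearMap.mul' k k (TensorProduct.map f g s) = 0) : s = 0 := by
  have key : ∀ η : Module.Dual k M ⊗[k] Module.Dual k N,
      TensorProduct.dualDistrib k M N η s = 0 := by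
    intro η
    induction η using TensorProduct.induction_on with
    | zero => simp
    | tmul f g => rw [dualDistrib_eq_mul']; exact h f g
    | add x y hx hy => rw [map_add, LinearMap.add_apply, hx, hy, add_zero]
  rw [← Module.forall_dual_apply_eq_zero_iff (R := k)]
  intro ξ
  obtain ⟨η, rfl⟩ := (TensorProduct.dualDistribEquiv k M N).surjective ξ
  have hcoe : (TensorProduct.dualDistribEquiv k M N) η = TensorProduct.dualDistrib k M N η := by
    simp [TensorProduct.dualDistribEquiv, TensorProduct.dualDistribEquivOfBasis]
  rw [hcoe]
  exact key η

end Sep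

section IdealToSubcoalgebra

variable {C : Type*} [AddCommGroup C] [Module k C] [Coalgebra k C]

lemma dualCoannihilator_top_eq_bot :
    (⊤ : Submodule k (Module.Dual k C)).dualCoannihilator = ⊥ := by
  ext x
  simp only [Submodule.mem_dualCoannihilator, Submodule.mem_top, Submodule.mem_bot, true_implies]
  exact ⟨fun h => (Module.forall_dual_apply_eq_zero_iff (R := k) x).mp fun φ => h φ,
    fun h φ => by rw [h, map_zero]⟩

variable [FiniteDimensional k C]

lemma isSubcoalgebra_dualCoannihilator
    {J : Submodule k (Module.Dual k C)} (hJ : IsTI J) :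
    IsSubcoalgebra k J.dualCoannihilator := by
  classical
  set W := J.dualCoannihilator with hWdef
  have hWJ : W.dualAnnihilator = J := Subspace.dualCoannihilator_dualAnnihilator_eq
  intro x hx
  have hx' : x ∈ W := hx
  have hz : ∀ φ ∈ J, ∀ ψ : Module.Dual k C,
      LinearMap.mul' k k (TensorProduct.map φ ψ (Coalgebra.comul (R := k) x)) = 0 ∧
      LinearMap.mul' k k (TensorProduct.map ψ φ (Coalgebra.comul (R := k) x)) = 0 := by
    intro φ hφ ψ
    constructor
    · rw [← cv_eval]
      exact (Submodule.mem_dualCoannihilator _).mp hx' _ (hJ φ hφ ψ).1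
    · rw [← cv_eval]
      exact (Submodule.mem_dualCoannihilator _).mp hx' _ (hJ φ hφ ψ).2
  have hmemJ : ∀ f : Module.Dual k (C ⧸ W), f ∘ₗ W.mkQ ∈ J := by
    intro f
    rw [← hWJ, Submodule.mem_dualAnnihilator]
    intro w hw
    simp only [LinearMap.comp_apply, Submodule.mkQ_apply]
    rw [(Submodule.Quotient.mk_eq_zero _).mpr hw, map_zero]
  have h1 : LinearMap.rTensor C W.mkQ (Coalgebra.comul (R := k) x) = 0 := by
    apply tensor_eq_zero_of_pairing
    intro f g
    have heq : TensorProduct.map f g (LinearMap.rTensor C W.mkQ (Coalgebra.comul (R := k) x))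
        = TensorProduct.map (f ∘ₗ W.mkQ) g (Coalgebra.comul (R := k) x) :=
      LinearMap.congr_fun (LinearMap.map_comp_rTensor (f := f) (g := g) (f' := W.mkQ))
        (Coalgebra.comul (R := k) x)
    rw [heq]
    exact (hz _ (hmemJ f) g).1
  have h2 : LinearMap.lTensor C W.mkQ (Coalgebra.comul (R := k) x) = 0 := by
    apply tensor_eq_zero_of_pairing
    intro f g
    have heq : TensorProduct.map f g (LinearMap.lTensor C W.mkQ (Coalgebra.comul (R := k) x))
        = TensorProduct.map f (g ∘ₗ W.mkQ) (Coalgebra.comul (R := k) x) :=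
      LinearMap.congr_fun (LinearMap.map_comp_lTensor (f := f) (g := g) (g' := W.mkQ))
        (Coalgebra.comul (R := k) x)
    rw [heq]
    exact (hz _ (hmemJ g) f).2
  obtain ⟨s, hs⟩ : Coalgebra.comul (R := k) x
      ∈ LinearMap.range (LinearMap.rTensor C W.subtype) := by
    rw [← rTensor_mkQ C W]
    exact LinearMap.mem_ker.mpr h1
  have h3 : LinearMap.lTensor (↥W) W.mkQ s = 0 := by
    have hinj : Function.Injective (LinearMap.rTensor (C ⧸ W) W.subtype) :=
      Module.Flat.rTensor_preserves_injective_linearMap _ W.injective_subtype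
    apply hinj
    rw [map_zero]
    have e1 : LinearMap.rTensor (C ⧸ W) W.subtype (LinearMap.lTensor (↥W) W.mkQ s)
        = TensorProduct.map W.subtype W.mkQ s :=
      LinearMap.congr_fun (LinearMap.rTensor_comp_lTensor (f := W.subtype) (g := W.mkQ)) s
    have e2 : LinearMap.lTensor C W.mkQ (LinearMap.rTensor C W.subtype s)
        = TensorProduct.map W.subtype W.mkQ s :=
      LinearMap.congr_fun (LinearMap.lTensor_comp_rTensor (f := W.subtype) (g := W.mkQ)) s
    rw [e1, ← e2, hs, h2]
  obtain ⟨s₂, hs₂⟩ : s ∈ LinearMap.range (LinearMap.lTensor (↥W) W.subtype) := by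
    rw [← lTensor_mkQ (↥W) W]
    exact LinearMap.mem_ker.mpr h3
  refine ⟨s₂, ?_⟩
  have e3 : LinearMap.rTensor C W.subtype (LinearMap.lTensor (↥W) W.subtype s₂)
      = TensorProduct.map W.subtype W.subtype s₂ :=
    LinearMap.congr_fun (LinearMap.rTensor_comp_lTensor (f := W.subtype) (g := W.subtype)) s₂
  rw [← e3, hs₂, hs]

end IdealToSubcoalgebra

section RingLemma

variable {C : Type*} [AddCommGroup C] [Module k C] [Coalgebra k C] [FiniteDimensional k C]

/-- The elementary CRT-style idempotent construction. -/
lemma exists_partial_idempotent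
    (S : Set (Submodule k (Module.Dual k C)))
    (hS_TI : ∀ M ∈ S, IsTI M)
    (hS_max : ∀ M ∈ S, ∀ J, IsTI J → M ≤ J → J = M ∨ J = ⊤)
    (hS_proper : ∀ M ∈ S, M ≠ ⊤)
    (M0 : Submodule k (Module.Dual k C)) (hM0 : M0 ∈ S)
    (t : Finset (Submodule k (Module.Dual k C))) (ht : ↑t ⊆ S) (hM0t : M0 ∉ t) :
    ∃ e : Module.Dual k C, Coalgebra.counit (R := k) - e ∈ M0 ∧ ∀ N ∈ t, e ∈ N := by
  classical
  induction t using Finset.induction_on with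
  | empty =>
    exact ⟨Coalgebra.counit (R := k), by simp, fun N hN => absurd hN (by simp)⟩
  | @insert N0 s hN0s ih =>
    have hs_sub : ↑s ⊆ S := fun x hx => ht (Finset.mem_insert_of_mem hx)
    have hM0s : M0 ∉ s := fun h => hM0t (Finset.mem_insert_of_mem h)
    obtain ⟨e, he1, he2⟩ := ih hs_sub hM0s
    have hN0S : N0 ∈ S := ht (Finset.mem_insert_self N0 s)
    have hne : M0 ≠ N0 := fun h => hM0t (h ▸ Finset.mem_insert_self N0 s)
    -- comaximality
    have hsup : M0 ⊔ N0 = ⊤ := by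
      rcases hS_max M0 hM0 (M0 ⊔ N0) (isTI_sup (hS_TI M0 hM0) (hS_TI N0 hN0S)) le_sup_left with
        h | h
      · exfalso
        have hN0le : N0 ≤ M0 := le_sup_right.trans h.le
        rcases hS_max N0 hN0S M0 (hS_TI M0 hM0) hN0le with h' | h'
        · exact hne h' 
        · exact hS_proper M0 hM0 h'
      · exact h
    have hcmem : Coalgebra.counit (R := k) (A := C) ∈ M0 ⊔ N0 := hsup ▸ Submodule.mem_top
    obtain ⟨u, hu, b, hb, hub⟩ := Submodule.mem_sup.mp hcmem
    refine ⟨cvL e b, ?_, ?_⟩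
    · -- counit - cvL e b = (counit - e) + cvL e u
      have h1 : cvL e u + cvL e b = e := by
        rw [← map_add, hub, cv_counit_right]
      have hkey : Coalgebra.counit (R := k) (A := C) - cvL e b
          = (Coalgebra.counit (R := k) - e) + cvL e u := by
        rw [eq_sub_of_add_eq h1]; abel
      rw [hkey]
      exact Submodule.add_mem M0 he1 ((hS_TI M0 hM0 u hu e).2)
    · intro N hN
      rcases Finset.mem_insert.mp hN with rfl | hNs
      · exact (hS_TI N hN0S b hb e).2
      · exact (hS_TI N (hs_sub hNs) e (he2 N hNs) b).1

lemma ring_lemma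
    (S : Set (Submodule k (Module.Dual k C)))
    (hS_TI : ∀ M ∈ S, IsTI M)
    (hS_max : ∀ M ∈ S, ∀ J, IsTI J → M ≤ J → J = M ∨ J = ⊤)
    (hS_proper : ∀ M ∈ S, M ≠ ⊤)
    (hS_inf : sInf S = ⊥)
    (I : Submodule k (Module.Dual k C)) (hI : IsTI I) :
    sInf {M | M ∈ S ∧ I ≤ M} ≤ I := by
  classical
  -- a finite subfamily with trivial intersection
  obtain ⟨t, ht_sub, ht_inf⟩ : ∃ t : Finset (Submodule k (Module.Dual k C)),
      ↑t ⊆ S ∧ t.inf id = ⊥ := by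
    set Q : Set (Submodule k (Module.Dual k C)) :=
      {P | ∃ t : Finset (Submodule k (Module.Dual k C)), ↑t ⊆ S ∧ P = t.inf id} with hQ
    have hQne : Q.Nonempty := ⟨⊤, ∅, by simp⟩
    obtain ⟨P0, hP0Q, hP0min⟩ := IsArtinian.set_has_minimal Q hQne
    obtain ⟨t0, ht0, rfl⟩ := hP0Q
    have hle : ∀ M ∈ S, t0.inf id ≤ M := by
      intro M hM
      have hmemQ : (insert M t0).inf id ∈ Q := by
        refine ⟨insert M t0, ?_, rfl⟩
        intro x hx
        rcases Finset.mem_insert.mp (Finset.mem_coe.mp hx) with rfl | hx'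
        · exact hM
        · exact ht0 hx'
      have hle' : (insert M t0).inf id ≤ t0.inf id := by
        rw [Finset.inf_insert]
        exact inf_le_right
      have heq : (insert M t0).inf id = t0.inf id := by
        by_contra hne
        exact hP0min _ hmemQ (lt_of_le_of_ne hle' hne)
      rw [Finset.inf_insert] at heq
      calc t0.inf id = id M ⊓ t0.inf id := heq.symm
        _ ≤ id M := inf_le_left
    refine ⟨t0, ht0, le_antisymm ?_ bot_le⟩
    rw [← hS_inf]
    exact le_sInf fun M hM => hle M hM
  -- the idempotent family
  have hE : ∀ M ∈ t, ∃ e : Module.Dual k C,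
      Coalgebra.counit (R := k) - e ∈ M ∧ ∀ N ∈ t.erase M, e ∈ N := by
    intro M hM
    exact exists_partial_idempotent S hS_TI hS_max hS_proper M (ht_sub hM) (t.erase M)
      (fun x hx => ht_sub (Finset.erase_subset M t hx)) (Finset.notMem_erase M t)
  set e : Submodule k (Module.Dual k C) → Module.Dual k C :=
    fun M => if h : M ∈ t then (hE M h).choose else 0 with he_def
  have he1 : ∀ M ∈ t, Coalgebra.counit (R := k) (A := C) - e M ∈ M := by
    intro M hM
    rw [he_def]
    simp only [dif_pos hM]
    exact (hE M hM).choose_spec.1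
  have he2 : ∀ M ∈ t, ∀ N ∈ t, N ≠ M → e M ∈ N := by
    intro M hM N hN hNM
    rw [he_def]
    simp only [dif_pos hM]
    exact (hE M hM).choose_spec.2 N (Finset.mem_erase.mpr ⟨hNM, hN⟩)
  -- the idempotents sum to 1
  have hsum : Coalgebra.counit (R := k) (A := C) = ∑ M ∈ t, e M := by
    have hmem : Coalgebra.counit (R := k) (A := C) - ∑ M ∈ t, e M ∈ t.inf _root_.id := by
      rw [Submodule.mem_finsetInf]
      intro N hN
      have hsplit : ∑ M ∈ t, e M = e N + ∑ M ∈ t.erase N, e M :=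
        (Finset.add_sum_erase t e hN).symm
      have : Coalgebra.counit (R := k) (A := C) - ∑ M ∈ t, e M
          = (Coalgebra.counit (R := k) - e N) - ∑ M ∈ t.erase N, e M := by
        rw [hsplit]; abel
      rw [this]
      refine Submodule.sub_mem _ (he1 N hN) (Submodule.sum_mem _ ?_)
      intro M hM
      have hMt : M ∈ t := Finset.mem_of_mem_erase hM
      have hMN : N ≠ M := fun h => (Finset.mem_erase.mp hM).1 h.symm
      exact he2 M hMt N hN hMN
    rw [ht_inf] at hmem
    have h0 := (Submodule.mem_bot k).mp hmem
    have := sub_eq_zero.mp h0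
    exact this
  -- the main argument
  intro y hy
  have hy' : ∀ M ∈ S, I ≤ M → y ∈ M := fun M hM hIM =>
    Submodule.mem_sInf.mp hy M ⟨hM, hIM⟩
  have hyrep : y = ∑ M ∈ t, cvL y (e M) := by
    conv_lhs => rw [← cv_counit_right y, hsum]
    rw [map_sum]
  rw [hyrep]
  apply Submodule.sum_mem
  intro M hM
  by_cases hIM : I ≤ M
  · -- this summand is zero
    have hyM : y ∈ M := hy' M (ht_sub hM) hIM
    have hz : cvL y (e M) ∈ t.inf _root_.id := by
      rw [Submodule.mem_finsetInf]
      intro N hN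
      by_cases hNM : N = M
      · subst hNM
        exact (hS_TI N (ht_sub hN) y hyM (e N)).1
      · exact (hS_TI N (ht_sub hN) (e M) (he2 M hM N hN hNM) y).2
    rw [ht_inf, Submodule.mem_bot] at hz
    rw [hz]
    exact Submodule.zero_mem I
  · -- here `e M ∈ I`
    have hsupI : I ⊔ M = ⊤ := by
      rcases hS_max M (ht_sub hM) (I ⊔ M) (isTI_sup hI (hS_TI M (ht_sub hM))) le_sup_right with
        h | h
      · exact absurd (le_sup_left.trans h.le) hIM
      · exact h
    have hcmem : Coalgebra.counit (R := k) (A := C) ∈ I ⊔ M := hsupI ▸ Submodule.mem_top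
    obtain ⟨u, hu, m, hm, hum⟩ := Submodule.mem_sup.mp hcmem
    have hme : cvL m (e M) ∈ t.inf _root_.id := by
      rw [Submodule.mem_finsetInf]
      intro N hN
      by_cases hNM : N = M
      · subst hNM
        exact (hS_TI N (ht_sub hN) m hm (e N)).1
      · exact (hS_TI N (ht_sub hN) (e M) (he2 M hM N hN hNM) m).2
    rw [ht_inf, Submodule.mem_bot] at hme
    have heI : e M ∈ I := by
      have hsplit : e M = cvL u (e M) + cvL m (e M) := by
        conv_lhs => rw [← cv_counit_left (e M), ← hum]
        rw [map_add]
        rfl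
      rw [hsplit, hme, add_zero]
      exact (hI u hu (e M)).1
    exact (hI (e M) heI y).2

end RingLemma

section MainT

variable {C : Type*} [AddCommGroup C] [Module k C] [Coalgebra k C] [FiniteDimensional k C]

lemma sInf_image_dualAnnihilator (T : Set (Submodule k C)) :
    sInf (Submodule.dualAnnihilator '' T) = (sSup T).dualAnnihilator := by
  rw [sSup_eq_iSup, sInf_image]
  simp_rw [Submodule.dualAnnihilator_iSup_eq]

/-- Key structure theorem: in a cosemisimple finite-dimensional coalgebra, every
subcoalgebra is a sum of the simple subcoalgebras contained in it. -/
lemma le_sSup_simples (hco : IsCosemisimple k C)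
    {E : Submodule k C} (hE : IsSubcoalgebra k E) :
    E ≤ sSup {V : Submodule k C | IsSimpleSubcoalgebra k V ∧ V ≤ E} := by
  classical
  set S : Set (Submodule k (Module.Dual k C)) :=
    Submodule.dualAnnihilator '' {V : Submodule k C | IsSimpleSubcoalgebra k V} with hS
  have hS_TI : ∀ M ∈ S, IsTI M := by
    rintro _ ⟨V, hV, rfl⟩
    exact isTI_dualAnnihilator hV.1
  have hS_proper : ∀ M ∈ S, M ≠ ⊤ := by
    rintro _ ⟨V, hV, rfl⟩ h
    apply hV.2.1
    have := congrArg Submodule.dualCoannihilator h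
    rw [Subspace.dualAnnihilator_dualCoannihilator_eq, dualCoannihilator_top_eq_bot] at this
    exact this
  have hS_max : ∀ M ∈ S, ∀ J, IsTI J → M ≤ J → J = M ∨ J = ⊤ := by
    rintro _ ⟨V, hV, rfl⟩ J hJTI hle
    have hWs : IsSubcoalgebra k J.dualCoannihilator := isSubcoalgebra_dualCoannihilator hJTI
    have hWle : J.dualCoannihilator ≤ V := by
      have h1 := Submodule.dualCoannihilator_anti hle
      rwa [Subspace.dualAnnihilator_dualCoannihilator_eq] at h1
    have hJgal : J.dualCoannihilator.dualAnnihilator = J :=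
      Subspace.dualCoannihilator_dualAnnihilator_eq
    rcases hV.2.2 _ hWle hWs with h0 | hVeq
    · right
      rw [← hJgal, h0, Submodule.dualAnnihilator_bot]
    · left
      rw [← hJgal, hVeq]
  have hS_inf : sInf S = ⊥ := by
    rw [hS, sInf_image_dualAnnihilator]
    rw [isCosemisimple_iff] at hco
    rw [hco, Submodule.dualAnnihilator_top]
  have hIT : IsTI E.dualAnnihilator := isTI_dualAnnihilator hE
  have hring := ring_lemma S hS_TI hS_max hS_proper hS_inf E.dualAnnihilator hIT
  have hsetid : {M | M ∈ S ∧ E.dualAnnihilator ≤ M}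
      = Submodule.dualAnnihilator '' {V : Submodule k C | IsSimpleSubcoalgebra k V ∧ V ≤ E} := by
    ext M
    constructor
    · rintro ⟨⟨V, hV, rfl⟩, hle⟩
      refine ⟨V, ⟨hV, ?_⟩, rfl⟩
      have h1 := Submodule.dualCoannihilator_anti hle
      rwa [Subspace.dualAnnihilator_dualCoannihilator_eq,
        Subspace.dualAnnihilator_dualCoannihilator_eq] at h1
    · rintro ⟨V, ⟨hV, hVE⟩, rfl⟩
      exact ⟨⟨V, hV, rfl⟩, Submodule.dualAnnihilator_anti hVE⟩
  rw [hsetid, sInf_image_dualAnnihilator] at hring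
  have h2 := Submodule.dualCoannihilator_anti hring
  rwa [Subspace.dualAnnihilator_dualCoannihilator_eq,
    Subspace.dualAnnihilator_dualCoannihilator_eq] at h2

end MainT

section Transfer

variable {A D : Type*} [AddCommGroup A] [Module k A] [Coalgebra k A]
  [AddCommGroup D] [Module k D] [Coalgebra k D]

lemma isSubcoalgebra_top' {C : Type*} [AddCommGroup C] [Module k C] [Coalgebra k C] :
    IsSubcoalgebra k (⊤ : Submodule k C) := by
  intro x _
  have h : LinearMap.range (TensorProduct.map (⊤ : Submodule k C).subtype
      (⊤ : Submodule k C).subtype) = ⊤ := by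
    rw [TensorProduct.range_map_eq_span_tmul, eq_top_iff, ← TensorProduct.span_tmul_eq_top k C C]
    apply Submodule.span_mono
    rintro _ ⟨m, n, rfl⟩
    exact ⟨⟨m, trivial⟩, ⟨n, trivial⟩, rfl⟩
  rw [h]
  trivial

variable {g : A →ₗ[k] D}

lemma isSubcoalgebra_map
    (hg : (Coalgebra.comul (R := k) (A := D)) ∘ₗ g
      = TensorProduct.map g g ∘ₗ (Coalgebra.comul (R := k) (A := A)))
    {W : Submodule k A} (hW : IsSubcoalgebra k W) : IsSubcoalgebra k (W.map g) := by
  rintro _ ⟨x, hx, rfl⟩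
  obtain ⟨t, ht⟩ := hW x hx
  have hcg : Coalgebra.comul (R := k) (g x)
      = TensorProduct.map g g (Coalgebra.comul (R := k) x) := LinearMap.congr_fun hg x
  set h : ↥W →ₗ[k] ↥(W.map g) :=
    LinearMap.codRestrict (W.map g) (g ∘ₗ W.subtype)
      (fun c => Submodule.mem_map_of_mem c.2) with hh
  have hcomp : (W.map g).subtype ∘ₗ h = g ∘ₗ W.subtype :=
    LinearMap.subtype_comp_codRestrict _ _ _
  refine ⟨TensorProduct.map h h t, ?_⟩
  rw [← LinearMap.comp_apply, ← TensorProduct.map_comp, hcomp, TensorProduct.map_comp,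
    LinearMap.comp_apply, ht, ← hcg]

lemma map_gg_injective (hginj : Function.Injective g) :
    Function.Injective (TensorProduct.map g g) := by
  have h1 : Function.Injective (LinearMap.rTensor D g) :=
    Module.Flat.rTensor_preserves_injective_linearMap _ hginj
  have h2 : Function.Injective (LinearMap.lTensor A g) :=
    Module.Flat.lTensor_preserves_injective_linearMap _ hginj
  rw [← LinearMap.rTensor_comp_lTensor, LinearMap.coe_comp]
  exact h1.comp h2

lemma isSubcoalgebra_comap (hginj : Function.Injective g)
    (hg : (Coalgebra.comul (R := k) (A := D)) ∘ₗ g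
      = TensorProduct.map g g ∘ₗ (Coalgebra.comul (R := k) (A := A)))
    {V : Submodule k D} (hle : V ≤ LinearMap.range g)
    (hV : IsSubcoalgebra k V) : IsSubcoalgebra k (V.comap g) := by
  intro x hx
  obtain ⟨t, ht⟩ := hV (g x) hx
  set W := V.comap g with hWdef
  have hmap : W.map g = V := Submodule.map_comap_eq_self hle
  set h : ↥W →ₗ[k] ↥V := LinearMap.codRestrict V (g ∘ₗ W.subtype) (fun c => c.2) with hh
  have hcomp : V.subtype ∘ₗ h = g ∘ₗ W.subtype := LinearMap.subtype_comp_codRestrict _ _ _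
  have hsurj : LinearMap.range (TensorProduct.map h h) = ⊤ := by
    rw [TensorProduct.range_map_eq_span_tmul, eq_top_iff,
      ← TensorProduct.span_tmul_eq_top k ↥V ↥V]
    apply Submodule.span_mono
    rintro _ ⟨m, n, rfl⟩
    have hm : (m : D) ∈ W.map g := hmap.symm ▸ m.2
    have hn : (n : D) ∈ W.map g := hmap.symm ▸ n.2
    obtain ⟨m', hm', hm'eq⟩ := hm
    obtain ⟨n', hn', hn'eq⟩ := hn
    refine ⟨⟨m', hm'⟩, ⟨n', hn'⟩, ?_⟩
    congr 1
    · ext; rw [← hm'eq]; rfl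
    · ext; rw [← hn'eq]; rfl
  obtain ⟨t', ht'⟩ : t ∈ LinearMap.range (TensorProduct.map h h) := hsurj ▸ Submodule.mem_top
  refine ⟨t', ?_⟩
  apply map_gg_injective hginj
  have e1 : TensorProduct.map g g (TensorProduct.map W.subtype W.subtype t')
      = TensorProduct.map V.subtype V.subtype (TensorProduct.map h h t') := by
    rw [← LinearMap.comp_apply, ← TensorProduct.map_comp, ← hcomp,
      TensorProduct.map_comp, LinearMap.comp_apply]
  rw [e1, ht', ht]
  exact LinearMap.congr_fun hg x

/-- Transfer of cosemisimplicity along an injective morphism of coalgebras,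
assuming the target is finite-dimensional. -/
lemma isCosemisimple_of_embedding [FiniteDimensional k D]
    (hginj : Function.Injective g)
    (hg : (Coalgebra.comul (R := k) (A := D)) ∘ₗ g
      = TensorProduct.map g g ∘ₗ (Coalgebra.comul (R := k) (A := A)))
    (hD : IsCosemisimple k D) : IsCosemisimple k A := by
  classical
  have hrange : IsSubcoalgebra k (LinearMap.range g) := by
    have := isSubcoalgebra_map (k := k) hg (isSubcoalgebra_top' (C := A))
    rwa [Submodule.map_top] at this
  have hmain := le_sSup_simples hD hrange
  rw [isCosemisimple_iff, eq_top_iff]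
  intro a _
  set T : Set (Submodule k D) :=
    {V : Submodule k D | IsSimpleSubcoalgebra k V ∧ V ≤ LinearMap.range g} with hT
  have hga : g a ∈ sSup T := hmain ⟨a, rfl⟩
  -- each element of T pulls back to a simple subcoalgebra of A
  have hpull : ∀ V ∈ T, IsSimpleSubcoalgebra k (V.comap g) := by
    rintro V ⟨⟨hVs, hVne, hVmin⟩, hVle⟩
    refine ⟨isSubcoalgebra_comap hginj hg hVle hVs, ?_, ?_⟩
    · intro h0
      apply hVne
      rw [← Submodule.map_comap_eq_self hVle, h0, Submodule.map_bot]
    · intro W hW hWs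
      have hWV : W.map g ≤ V := by
        rw [← Submodule.map_comap_eq_self hVle]
        exact Submodule.map_mono hW
      rcases hVmin (W.map g) hWV (isSubcoalgebra_map hg hWs) with h0 | hVeq
      · left
        exact Submodule.map_injective_of_injective hginj
          (h0.trans (Submodule.map_bot g).symm)
      · right
        exact Submodule.map_injective_of_injective hginj
          (hVeq.trans (Submodule.map_comap_eq_self hVle).symm)
  -- rewrite the sup over T as an image
  have hsup : sSup T = Submodule.map g (⨆ V ∈ T, V.comap g) := by
    rw [sSup_eq_iSup]
    rw [Submodule.map_iSup]
    apply le_antisymm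
    · apply iSup_le
      intro V
      apply iSup_le
      intro hV
      have : V = Submodule.map g (V.comap g) := (Submodule.map_comap_eq_self hV.2).symm
      rw [this]
      exact le_iSup_of_le V (by
        rw [Submodule.map_iSup]
        exact le_iSup_of_le hV le_rfl)
    · apply iSup_le
      intro V
      rw [Submodule.map_iSup]
      apply iSup_le
      intro hV
      rw [Submodule.map_comap_eq_self hV.2]
      exact le_iSup_of_le V (le_iSup_of_le hV le_rfl)
  rw [hsup] at hga
  obtain ⟨b, hb, hba⟩ := hga
  have hab : b = a := hginj hba
  subst hab
  have hfin : (⨆ V ∈ T, V.comap g) ≤ sSup {V : Submodule k A | IsSimpleSubcoalgebra k V} := by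
    apply iSup_le
    intro V
    apply iSup_le
    intro hV
    exact le_sSup (hpull V hV)
  exact hfin hb

end Transfer

section Glue

variable {A H : Type*} [AddCommGroup A] [Module k A] [Coalgebra k A]
  [AddCommGroup H] [Module k H] [Coalgebra k H]

lemma ttt_tmul_one_one (oneH : H) (y : A ⊗[k] A) :
    TensorProduct.tensorTensorTensorComm k A A H H (y ⊗ₜ (oneH ⊗ₜ oneH))
      = TensorProduct.map ((TensorProduct.mk k A H).flip oneH)
          ((TensorProduct.mk k A H).flip oneH) y := by
  induction y using TensorProduct.induction_on with
  | zero => simp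
  | tmul m n => simp
  | add x y hx hy =>
    rw [TensorProduct.add_tmul, map_add, map_add, hx, hy]

lemma ttt_one_one_tmul (oneA : A) (y : H ⊗[k] H) :
    TensorProduct.tensorTensorTensorComm k A A H H ((oneA ⊗ₜ oneA) ⊗ₜ y)
      = TensorProduct.map ((TensorProduct.mk k A H) oneA)
          ((TensorProduct.mk k A H) oneA) y := by
  induction y using TensorProduct.induction_on with
  | zero => simp
  | tmul m n => simp
  | add x y hx hy =>
    rw [TensorProduct.tmul_add, map_add, map_add, hx, hy]

end Glue

end Aux

/-- If `D = A ⋈ H` is a double cross product of finite-dimensional Hopf algebras (its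
underlying coalgebra is the tensor product coalgebra `A ⊗ H`, and the algebra structure
restricts to `A` and `H` as usual) and `D` is cosemisimple, then `A` and `H` are
cosemisimple. -/
theorem cosemisimple_of_double_cross_product (k A H D : Type*) [Field k]
    [Ring A] [HopfAlgebra k A] [Ring H] [HopfAlgebra k H] [Ring D] [HopfAlgebra k D]
    [FiniteDimensional k A] [FiniteDimensional k H] [FiniteDimensional k D]
    (f : (A ⊗[k] H) ≃ₗ[k] D)
    (hone : f (1 ⊗ₜ 1) = 1)
    (hmulA : ∀ (a a' : A) (h : H), f (a ⊗ₜ 1) * f (a' ⊗ₜ h) = f ((a * a') ⊗ₜ h))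
    (hmulH : ∀ (a : A) (h h' : H), f (a ⊗ₜ h) * f (1 ⊗ₜ h') = f (a ⊗ₜ (h * h')))
    (hcounit : ∀ x : A ⊗[k] H,
      Coalgebra.counit (R := k) (f x) = Coalgebra.counit (R := k) x)
    (hcomul : ∀ x : A ⊗[k] H,
      Coalgebra.comul (R := k) (f x) =
        TensorProduct.map f.toLinearMap f.toLinearMap (Coalgebra.comul (R := k) x))
    (hcoss : IsCosemisimple k D) :
    IsCosemisimple k A ∧ IsCosemisimple k H := by
  constructor
  · -- A is cosemisimple
    set mA : A →ₗ[k] A ⊗[k] H := (TensorProduct.mk k A H).flip 1 with hmA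
    set gA : A →ₗ[k] D := f.toLinearMap ∘ₗ mA with hgA
    have hmA_apply : ∀ a : A, mA a = a ⊗ₜ[k] (1 : H) := fun a => rfl
    -- injectivity
    have hmA_inj : Function.Injective mA := by
      set r : A ⊗[k] H →ₗ[k] A := (TensorProduct.rid k A).toLinearMap ∘ₗ
        LinearMap.lTensor A (Coalgebra.counit (R := k) (A := H)) with hr
      have hretr : ∀ a : A, r (mA a) = a := by
        intro a
        rw [hmA_apply]
        simp [hr, Bialgebra.counit_one]
      intro a b hab
      rw [← hretr a, ← hretr b, hab]
    have hgA_inj : Function.Injective gA := by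
      rw [hgA, LinearMap.coe_comp]
      exact f.injective.comp hmA_inj
    -- comultiplication compatibility
    have hcompat : (Coalgebra.comul (R := k) (A := D)) ∘ₗ gA
        = TensorProduct.map gA gA ∘ₗ (Coalgebra.comul (R := k) (A := A)) := by
      apply LinearMap.ext
      intro a
      have e2 : Coalgebra.comul (R := k) (a ⊗ₜ[k] (1 : H))
          = TensorProduct.map mA mA (Coalgebra.comul (R := k) a) := by
        rw [TensorProduct.comul_def, LinearMap.comp_apply,
          TensorProduct.AlgebraTensorModule.map_tmul]
        have hc1 : Coalgebra.comul (R := k) (1 : H) = (1 : H) ⊗ₜ[k] (1 : H) := by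
          rw [Bialgebra.comul_one, Algebra.TensorProduct.one_def]
        rw [hc1]
        exact ttt_tmul_one_one (1 : H) (Coalgebra.comul (R := k) a)
      have e3 : ∀ y : A ⊗[k] A, TensorProduct.map f.toLinearMap f.toLinearMap
          (TensorProduct.map mA mA y) = TensorProduct.map gA gA y := by
        intro y
        rw [← LinearMap.comp_apply, ← TensorProduct.map_comp, hgA]
      change Coalgebra.comul (R := k) (f (mA a))
        = TensorProduct.map gA gA (Coalgebra.comul (R := k) a)
      rw [hmA_apply, hcomul, e2, e3]
    exact isCosemisimple_of_embedding hgA_inj hcompat hcoss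
  · -- H is cosemisimple
    set mH : H →ₗ[k] A ⊗[k] H := (TensorProduct.mk k A H) 1 with hmH
    set gH : H →ₗ[k] D := f.toLinearMap ∘ₗ mH with hgH
    have hmH_apply : ∀ h : H, mH h = (1 : A) ⊗ₜ[k] h := fun h => rfl
    have hmH_inj : Function.Injective mH := by
      set r : A ⊗[k] H →ₗ[k] H := (TensorProduct.lid k H).toLinearMap ∘ₗ
        LinearMap.rTensor H (Coalgebra.counit (R := k) (A := A)) with hr
      have hretr : ∀ h : H, r (mH h) = h := by
        intro h
        rw [hmH_apply]
        simp [hr, Bialgebra.counit_one]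
      intro a b hab
      rw [← hretr a, ← hretr b, hab]
    have hgH_inj : Function.Injective gH := by
      rw [hgH, LinearMap.coe_comp]
      exact f.injective.comp hmH_inj
    have hcompat : (Coalgebra.comul (R := k) (A := D)) ∘ₗ gH
        = TensorProduct.map gH gH ∘ₗ (Coalgebra.comul (R := k) (A := H)) := by
      apply LinearMap.ext
      intro h
      have e2 : Coalgebra.comul (R := k) ((1 : A) ⊗ₜ[k] h)
          = TensorProduct.map mH mH (Coalgebra.comul (R := k) h) := by
        rw [TensorProduct.comul_def, LinearMap.comp_apply,
          TensorProduct.AlgebraTensorModule.map_tmul]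
        have hc1 : Coalgebra.comul (R := k) (1 : A) = (1 : A) ⊗ₜ[k] (1 : A) := by
          rw [Bialgebra.comul_one, Algebra.TensorProduct.one_def]
        rw [hc1]
        exact ttt_one_one_tmul (1 : A) (Coalgebra.comul (R := k) h)
      have e3 : ∀ y : H ⊗[k] H, TensorProduct.map f.toLinearMap f.toLinearMap
          (TensorProduct.map mH mH y) = TensorProduct.map gH gH y := by
        intro y
        rw [← LinearMap.comp_apply, ← TensorProduct.map_comp, hgH]
      change Coalgebra.comul (R := k) (f (mH h))
        = TensorProduct.map gH gH (Coalgebra.comul (R := k) h)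
      rw [hmH_apply, hcomul, e2, e3]
    exact isCosemisimple_of_embedding hgH_inj hcompat hcoss
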